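/- Let c > 0, β > 0, m > 0, and let v : [0,∞) → ℝ be a differentiable solution of m v'(t) = -(β²/(2c)) · v(t)/(c² - v(t)²) with |v(0)| < c. Then v(t) → 0 exponentially fast as t → ∞; precisely, there exists K > 0 such that |v(t)| ≤ |v(0)| · exp(-K t) for all t ≥ 0, with K = β²/(2 m c³). -/

import Mathlib

/-- exponential decay `|v t| ≤ |v 0| exp(-K t)` with `K = β²/(2 m c³)`. -/
theorem stmt_2 (c β m : ℝ) (hc : 0 < c) (hβ : 0 < β) (hm : 0 < m)
    (v : ℝ → ℝ)
    (hv : ∀ t ∈ Set.Ici (0:ℝ),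
      HasDerivAt v (-(β^2/(2*c)) * (v t / (c^2 - (v t)^2)) / m) t)
    (h0 : |v 0| < c) :
    ∃ K : ℝ, 0 < K ∧ K = β^2/(2*m*c^3) ∧
      ∀ t ∈ Set.Ici (0:ℝ), |v t| ≤ |v 0| * Real.exp (-K * t) := by
  set K : ℝ := β^2/(2*m*c^3) with hKdef
  have hK : 0 < K := by positivity
  refine ⟨K, hK, rfl, ?_⟩
  set g : ℝ → ℝ := fun t => (v t)^2 * Real.exp (2*K*t) with hgdef
  have hva : ∀ t ∈ Set.Ici (0:ℝ), ContinuousAt v t := fun t ht => (hv t ht).continuousAt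
  have h02 : (v 0)^2 < c^2 := by
    have := abs_lt.mp h0
    nlinarith [this.1, this.2]
  -- derivative of g at points z ≥ 0 where v z ^ 2 < c ^ 2
  have hgderiv : ∀ z : ℝ, 0 ≤ z → (v z)^2 < c^2 →
      HasDerivAt g (Real.exp (2*K*z) *
        (2 * v z * (-(β^2/(2*c)) * (v z / (c^2 - (v z)^2)) / m) + 2*K*(v z)^2)) z := by
    intro z hz hvz
    have h1 : HasDerivAt (fun t => (v t)^2)
        (2 * v z * (-(β^2/(2*c)) * (v z / (c^2 - (v z)^2)) / m)) z := by
      have := (hv z hz).fun_pow 2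
      simpa [mul_comm, mul_assoc, mul_left_comm] using this
    have h2 : HasDerivAt (fun t => Real.exp (2*K*t)) (Real.exp (2*K*z) * (2*K)) z := by
      have := ((hasDerivAt_id z).const_mul (2*K)).exp
      simpa [mul_comm] using this
    have := h1.fun_mul h2
    refine this.congr_deriv ?_
    ring
  have hgderiv_nonpos : ∀ z : ℝ, 0 ≤ z → (v z)^2 < c^2 → deriv g z ≤ 0 := by
    intro z hz hvz
    rw [(hgderiv z hz hvz).deriv]
    have hd : 0 < c^2 - (v z)^2 := by linarith
    have hE : 2 * v z * (-(β^2/(2*c)) * (v z / (c^2 - (v z)^2)) / m) + 2*K*(v z)^2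
        = -(β^2 * (v z)^4) / (m * c^3 * (c^2 - (v z)^2)) := by
      rw [hKdef]
      field_simp
      ring
    rw [hE]
    have h1 : -(β^2 * (v z)^4) / (m * c^3 * (c^2 - (v z)^2)) ≤ 0 := by
      apply div_nonpos_of_nonpos_of_nonneg
      · nlinarith [sq_nonneg ((v z)^2)]
      · positivity
    have h2 : (0:ℝ) ≤ Real.exp (2*K*z) := Real.exp_nonneg _
    exact mul_nonpos_of_nonneg_of_nonpos h2 h1
  -- main invariant: g t ≤ (v 0)^2 on [0, T] for every T
  have main : ∀ T : ℝ, 0 ≤ T → ∀ t ∈ Set.Icc (0:ℝ) T, g t ≤ (v 0)^2 := by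
    intro T hT
    set s : Set ℝ := {t | g t ≤ (v 0)^2} with hsdef
    have hvcont : ContinuousOn v (Set.Icc 0 T) := fun t ht =>
      (hva t ht.1).continuousWithinAt
    have hgcont : ContinuousOn g (Set.Icc 0 T) :=
      (hvcont.pow 2).mul (Real.continuous_exp.comp (continuous_const.mul continuous_id)).continuousOn
    apply IsClosed.Icc_subset_of_forall_exists_gt
    · have := hgcont.preimage_isClosed_of_isClosed (t := Set.Iic ((v 0)^2)) isClosed_Icc isClosed_Iic
      rw [Set.inter_comm] at this
      exact this
    · show g 0 ≤ (v 0)^2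
      simp [hgdef]
    · rintro x ⟨hxs, hx0, hxT⟩ y hy
      have hgx : g x ≤ (v 0)^2 := hxs
      have hexp1 : (1:ℝ) ≤ Real.exp (2*K*x) := by
        rw [show (1:ℝ) = Real.exp 0 by simp]
        exact Real.exp_le_exp.mpr (by positivity)
      have hvx2 : (v x)^2 < c^2 := by
        have : (v x)^2 ≤ (v x)^2 * Real.exp (2*K*x) := by
          nlinarith [sq_nonneg (v x)]
        calc (v x)^2 ≤ g x := this
          _ ≤ (v 0)^2 := hgx
          _ < c^2 := h02
      -- continuity: v²< c² in a neighborhood of x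
      have hvc2 : ContinuousAt (fun t => (v t)^2) x := (hva x hx0).pow 2
      have hnb : ∀ᶠ t in nhds x, (v t)^2 < c^2 :=
        hvc2.eventually_lt continuousAt_const hvx2
      obtain ⟨δ, hδ, hball⟩ := Metric.eventually_nhds_iff.mp hnb
      set z : ℝ := min (x + δ/2) y with hzdef
      have hxz : x < z := lt_min (by linarith) hy
      have hsub : ∀ w ∈ Set.Icc x z, (v w)^2 < c^2 := by
        intro w hw
        apply hball
        have hwz : w ≤ x + δ/2 := le_trans hw.2 (min_le_left _ _)
        rw [Real.dist_eq, abs_lt]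
        constructor <;> [linarith [hw.1]; linarith]
      have hanti : AntitoneOn g (Set.Icc x z) := by
        apply antitoneOn_of_deriv_nonpos (convex_Icc x z)
        · intro w hw
          exact ((hgderiv w (le_trans hx0 hw.1) (hsub w hw)).continuousAt).continuousWithinAt
        · intro w hw
          rw [interior_Icc] at hw
          exact (hgderiv w (le_trans hx0 (le_of_lt hw.1))
            (hsub w ⟨le_of_lt hw.1, le_of_lt hw.2⟩)).differentiableAt.differentiableWithinAt
        · intro w hw
          rw [interior_Icc] at hw
          exact hgderiv_nonpos w (le_trans hx0 (le_of_lt hw.1))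
            (hsub w ⟨le_of_lt hw.1, le_of_lt hw.2⟩)
      refine ⟨z, ?_, hxz, min_le_right _ _⟩
      have : g z ≤ g x := hanti ⟨le_refl x, le_of_lt hxz⟩ ⟨le_of_lt hxz, le_refl z⟩ (le_of_lt hxz)
      exact le_trans this hgx
  -- conclude
  intro t ht
  have hgt : g t ≤ (v 0)^2 := main t ht t ⟨ht, le_refl t⟩
  have hsq : (|v t| * Real.exp (K*t))^2 ≤ (|v 0|)^2 := by
    have : (|v t| * Real.exp (K*t))^2 = (v t)^2 * Real.exp (2*K*t) := by
      rw [mul_pow, sq_abs, sq (Real.exp (K*t)), ← Real.exp_add]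
      ring_nf
    rw [this, sq_abs]
    exact hgt
  have habs : |v t| * Real.exp (K*t) ≤ |v 0| := by
    have h1 : (0:ℝ) ≤ |v t| * Real.exp (K*t) := by positivity
    exact (pow_le_pow_iff_left₀ h1 (abs_nonneg _) (by norm_num)).mp hsq
  have hee : Real.exp (K*t) * Real.exp (-K*t) = 1 := by
    rw [← Real.exp_add]; ring_nf; exact Real.exp_zero
  have hme := mul_le_mul_of_nonneg_right habs (Real.exp_nonneg (-K*t))
  calc |v t| = |v t| * (Real.exp (K*t) * Real.exp (-K*t)) := by rw [hee, mul_one]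
    _ = |v t| * Real.exp (K*t) * Real.exp (-K*t) := by ring
    _ ≤ |v 0| * Real.exp (-K*t) := hme
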